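/- arXiv:0904.0707 — 2 statements merged into one kernel-verified Lean document; each statement's English description precedes it below -/
import Mathlib

section
/- Strict separation of obstacles at a maximum point: let u_1,…,u_m be a viscosity subsolution and w_1,…,w_m a viscosity supersolution of the system min{v_i(x) − max_{j≠i}(−g_{ij}(x)+v_j(x)), r v_i(x) − A v_i(x) − ψ_i(x)} = 0 on a ball B_R, with costs g_{ij} ≥ α > 0. Let Φ^i_ε(x,y) = u_i(x) − (1−λ)w_i(y) − (1/2ε)|x−y|^{2γ} − θ(|x−x_0|^{2γ+2} + |y−x_0|^{2γ+2}) and let (x_ε, y_ε, i_ε) maximize Φ^i_ε over B_R × B_R × {1,…,m}. Then for ε small (depending on λ, θ and the uniform continuity modulus of the g_{ij} on B_R), u_{i_ε}(x_ε) − max_{j≠i_ε}(−g_{i_ε j}(x_ε) + u_j(x_ε)) > 0. -/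
open Filter Topology Set

variable {k : ℕ}

/-- Quadratic form of a `k×k` matrix on `ℝ^k`. -/
noncomputable def quadForm (A : Matrix (Fin k) (Fin k) ℝ) (z : EuclideanSpace ℝ (Fin k)) : ℝ :=
  ∑ i, ∑ j, A i j * z i * z j

/-- `(q, A)` belongs to the second-order subjet `J^{2,-} v(x)`. -/
def InSubjet (v : EuclideanSpace ℝ (Fin k) → ℝ) (x q : EuclideanSpace ℝ (Fin k))
    (A : Matrix (Fin k) (Fin k) ℝ) : Prop :=
  ∀ ε > (0:ℝ), ∀ᶠ y in 𝓝 x,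
    v x + (∑ i, q i * (y - x) i) + (1 / 2) * quadForm A (y - x) - ε * ‖y - x‖ ^ 2 ≤ v y

/-- `(q, A)` belongs to the second-order superjet `J^{2,+} v(x)`. -/
def InSuperjet (v : EuclideanSpace ℝ (Fin k) → ℝ) (x q : EuclideanSpace ℝ (Fin k))
    (A : Matrix (Fin k) (Fin k) ℝ) : Prop :=
  ∀ ε > (0:ℝ), ∀ᶠ y in 𝓝 x,
    v y ≤ v x + (∑ i, q i * (y - x) i) + (1 / 2) * quadForm A (y - x) + ε * ‖y - x‖ ^ 2

/-- Viscosity supersolution of the system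
`min{v_i − max_{j≠i}(−g_{ij} + v_j), G_i(x, v_i, Dv_i, D²v_i)} = 0` on a set `S`, where
`G i x v q A` stands for `r v_i(x) − A v_i(x) − ψ_i(x)` evaluated on jets. -/
def SystemSupersolution {m : ℕ}
    (G : Fin m → EuclideanSpace ℝ (Fin k) → ℝ → EuclideanSpace ℝ (Fin k) →
      Matrix (Fin k) (Fin k) ℝ → ℝ)
    (g : Fin m → Fin m → EuclideanSpace ℝ (Fin k) → ℝ)
    (v : Fin m → EuclideanSpace ℝ (Fin k) → ℝ) (S : Set (EuclideanSpace ℝ (Fin k))) : Prop :=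
  ∀ i : Fin m, ∀ x ∈ S, ∀ q A, InSubjet (v i) x q A →
    0 ≤ min (v i x - ⨆ j : {j : Fin m // j ≠ i}, (-(g i j x) + v j x)) (G i x (v i x) q A)

/-- Viscosity subsolution of the same system on a set `S`. -/
def SystemSubsolution {m : ℕ}
    (G : Fin m → EuclideanSpace ℝ (Fin k) → ℝ → EuclideanSpace ℝ (Fin k) →
      Matrix (Fin k) (Fin k) ℝ → ℝ)
    (g : Fin m → Fin m → EuclideanSpace ℝ (Fin k) → ℝ)
    (v : Fin m → EuclideanSpace ℝ (Fin k) → ℝ) (S : Set (EuclideanSpace ℝ (Fin k))) : Prop :=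
  ∀ i : Fin m, ∀ x ∈ S, ∀ q A, InSuperjet (v i) x q A →
    min (v i x - ⨆ j : {j : Fin m // j ≠ i}, (-(g i j x) + v j x)) (G i x (v i x) q A) ≤ 0


private lemma norm_sq_sum (z : EuclideanSpace ℝ (Fin k)) : ‖z‖^2 = ∑ i, z i ^ 2 := by
  rw [EuclideanSpace.norm_eq, Real.sq_sqrt (by positivity)]
  simp [sq_abs]

private lemma quadForm_diag (c : ℝ) (z : EuclideanSpace ℝ (Fin k)) :
    quadForm (Matrix.diagonal (fun _ => c)) z = c * ∑ i, z i ^ 2 := by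
  unfold quadForm
  rw [Finset.mul_sum]
  refine Finset.sum_congr rfl fun i _ => ?_
  rw [Finset.sum_eq_single i]
  · simp [Matrix.diagonal_apply_eq]; ring
  · intro j _ hj
    rw [Matrix.diagonal_apply_ne _ hj.symm]; ring
  · simp

private lemma exists_subjet_near (R : ℝ) (v : EuclideanSpace ℝ (Fin k) → ℝ)
    (hv : ContinuousOn v (Metric.closedBall 0 R)) (xh : EuclideanSpace ℝ (Fin k))
    (hxh : xh ∈ Metric.ball (0 : EuclideanSpace ℝ (Fin k)) R) (δ' : ℝ) (hδ' : 0 < δ') :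
    ∃ ys ∈ Metric.closedBall (0 : EuclideanSpace ℝ (Fin k)) R, ‖ys - xh‖ < δ' ∧
      ∃ q A, InSubjet v ys q A := by
  set δ : ℝ := min δ' ((R - ‖xh‖) / 2) with hδdef
  have hxhR : ‖xh‖ < R := by simpa using hxh
  have hδpos : 0 < δ := lt_min hδ' (by linarith)
  have hsub : Metric.closedBall xh δ ⊆ Metric.ball (0:EuclideanSpace ℝ (Fin k)) R := by
    intro y hy
    have h1 : ‖y - xh‖ ≤ δ := by simpa [dist_eq_norm] using hy
    have h2 : δ ≤ (R - ‖xh‖)/2 := min_le_right _ _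
    have : ‖y‖ ≤ ‖y - xh‖ + ‖xh‖ := by
      simpa using norm_add_le (y - xh) xh
    simp only [Metric.mem_ball, dist_zero_right]
    linarith
  have hsub' : Metric.closedBall xh δ ⊆ Metric.closedBall (0:EuclideanSpace ℝ (Fin k)) R :=
    hsub.trans Metric.ball_subset_closedBall
  obtain ⟨M0, hM0⟩ :=
    (isCompact_closedBall (0:EuclideanSpace ℝ (Fin k)) R).exists_bound_of_continuousOn hv
  set M : ℝ := max M0 0 with hMdef
  have hM : ∀ y ∈ Metric.closedBall (0:EuclideanSpace ℝ (Fin k)) R, |v y| ≤ M :=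
    fun y hy => le_trans (hM0 y hy) (le_max_left _ _)
  have hMnn : 0 ≤ M := le_max_right _ _
  set C : ℝ := (2*M + 1)/δ^2 with hCdef
  have hCpos : 0 < C := by positivity
  have hcont : ContinuousOn (fun y => v y + C * ‖y - xh‖^2) (Metric.closedBall xh δ) := by
    refine ContinuousOn.add (hv.mono hsub') ?_
    exact (Continuous.mul continuous_const (by continuity)).continuousOn
  obtain ⟨ys, hysmem, hysmin⟩ := (isCompact_closedBall xh δ).exists_isMinOn
    ⟨xh, Metric.mem_closedBall_self hδpos.le⟩ hcont
  have hminxh : v ys + C * ‖ys - xh‖^2 ≤ v xh + C * ‖xh - xh‖^2 :=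
    hysmin (Metric.mem_closedBall_self hδpos.le)
  have hvys := hM ys (hsub' hysmem)
  have hvxh := hM xh (Metric.ball_subset_closedBall hxh)
  have hanorm : ‖ys - xh‖ < δ := by
    by_contra hcon
    push_neg at hcon
    have h1 : δ^2 ≤ ‖ys - xh‖^2 := by
      apply pow_le_pow_left₀ hδpos.le hcon
    have h2 : C * ‖ys - xh‖^2 ≤ 2*M := by
      have := abs_le.1 hvys
      have := abs_le.1 hvxh
      have h0 : ‖xh - xh‖ = 0 := by simp
      rw [h0] at hminxh
      nlinarith
    have hC2 : C * δ^2 = 2*M + 1 := by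
      rw [hCdef, div_mul_cancel₀]
      positivity
    nlinarith [mul_le_mul_of_nonneg_left h1 hCpos.le]
  refine ⟨ys, hsub' hysmem, lt_of_lt_of_le hanorm (min_le_left _ _), ?_⟩
  refine ⟨(-(2*C)) • (ys - xh), Matrix.diagonal (fun _ => -(2*C)), ?_⟩
  intro ε hε
  have hopen : Metric.ball xh δ ∈ 𝓝 ys :=
    Metric.isOpen_ball.mem_nhds (by simpa [dist_eq_norm] using hanorm)
  filter_upwards [hopen] with y hy
  have hymem : y ∈ Metric.closedBall xh δ := Metric.ball_subset_closedBall hy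
  have hmin : v ys + C * ‖ys - xh‖^2 ≤ v y + C * ‖y - xh‖^2 := hysmin hymem
  rw [quadForm_diag]
  have hsum1 : (∑ i, ((-(2*C)) • (ys - xh)) i * (y - ys) i)
      = -(2*C) * ∑ i, (ys - xh) i * (y - ys) i := by
    rw [Finset.mul_sum]
    refine Finset.sum_congr rfl fun i _ => ?_
    simp [PiLp.smul_apply, smul_eq_mul]; ring
  have hexp : ‖y - xh‖^2 = ‖y - ys‖^2 + 2 * (∑ i, (ys - xh) i * (y - ys) i) + ‖ys - xh‖^2 := by
    rw [norm_sq_sum (y - xh), norm_sq_sum (y - ys), norm_sq_sum (ys - xh),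
      Finset.mul_sum, ← Finset.sum_add_distrib, ← Finset.sum_add_distrib]
    refine Finset.sum_congr rfl fun i _ => ?_
    simp only [PiLp.sub_apply]
    ring
  have hz2 : (0:ℝ) ≤ ε * ‖y - ys‖^2 := by positivity
  rw [hsum1, ← norm_sq_sum]
  nlinarith [hmin, hexp, hz2, hCpos.le]

/-- The supersolution obstacle inequality holds at every point of the closed ball. -/
private lemma supersol_obstacle {m : ℕ} (R : ℝ) (hR : 0 < R)
    (G : Fin m → EuclideanSpace ℝ (Fin k) → ℝ → EuclideanSpace ℝ (Fin k) →
      Matrix (Fin k) (Fin k) ℝ → ℝ)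
    (g : Fin m → Fin m → EuclideanSpace ℝ (Fin k) → ℝ)
    (hgc : ∀ i j, ContinuousOn (g i j) (Metric.closedBall 0 R))
    (w : Fin m → EuclideanSpace ℝ (Fin k) → ℝ)
    (hw : ∀ i, ContinuousOn (w i) (Metric.closedBall 0 R))
    (hsup : SystemSupersolution G g w (Metric.closedBall 0 R))
    (i j : Fin m) (hij : j ≠ i) :
    ∀ y ∈ Metric.closedBall (0:EuclideanSpace ℝ (Fin k)) R, w j y - g i j y ≤ w i y := by
  intro yh hyh
  set h : EuclideanSpace ℝ (Fin k) → ℝ := fun y => w i y + g i j y - w j y with hhdef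
  have hcont : ContinuousOn h (Metric.closedBall 0 R) :=
    ((hw i).add (hgc i j)).sub (hw j)
  have hinterior : ∀ ys ∈ Metric.closedBall (0:EuclideanSpace ℝ (Fin k)) R,
      (∃ q A, InSubjet (w i) ys q A) → 0 ≤ h ys := by
    rintro ys hys ⟨q, A, hqA⟩
    have h1 := hsup i ys hys q A hqA
    have h2 : 0 ≤ w i ys - ⨆ j' : {j' : Fin m // j' ≠ i}, (-(g i j' ys) + w j' ys) :=
      le_trans h1 (min_le_left _ _)
    have h3 : -(g i j ys) + w j ys
        ≤ ⨆ j' : {j' : Fin m // j' ≠ i}, (-(g i j' ys) + w j' ys) :=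
      le_ciSup (f := fun j' : {j' : Fin m // j' ≠ i} => -(g i j' ys) + w j' ys)
        (Set.Finite.bddAbove (Set.finite_range _)) ⟨j, hij⟩
    simp only [hhdef]
    linarith
  have key : ∀ η > (0:ℝ), -η ≤ h yh := by
    intro η hη
    have hcw : ContinuousWithinAt h (Metric.closedBall 0 R) yh := hcont yh hyh
    rw [Metric.continuousWithinAt_iff] at hcw
    obtain ⟨ρ, hρ, hball⟩ := hcw η hη
    set t : ℝ := min (ρ/(3*(R+1))) (1/2) with htdef
    have ht0 : 0 < t := lt_min (by positivity) (by norm_num)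
    have ht1 : t ≤ 1/2 := min_le_right _ _
    set xh : EuclideanSpace ℝ (Fin k) := (1-t) • yh with hxhdef
    have hyhR : ‖yh‖ ≤ R := by simpa using hyh
    have hxhnorm : ‖xh‖ = (1-t) * ‖yh‖ := by
      rw [hxhdef, norm_smul, Real.norm_eq_abs, abs_of_nonneg (by linarith)]
    have hxhmem : xh ∈ Metric.ball (0:EuclideanSpace ℝ (Fin k)) R := by
      simp only [Metric.mem_ball, dist_zero_right, hxhnorm]
      nlinarith [norm_nonneg yh]
    have hxhyh : ‖xh - yh‖ ≤ t * R := by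
      have : xh - yh = (-t) • yh := by
        rw [hxhdef]; module
      rw [this, norm_smul, Real.norm_eq_abs, abs_of_nonpos (by linarith)]
      have := mul_le_mul_of_nonneg_left hyhR ht0.le
      linarith
    have htR : t * R < ρ / 3 := by
      have h1 : t ≤ ρ/(3*(R+1)) := min_le_left _ _
      have h2 : t * R ≤ (ρ/(3*(R+1))) * R := mul_le_mul_of_nonneg_right h1 hR.le
      have h3 : (ρ/(3*(R+1))) * R < ρ/3 := by
        rw [div_mul_eq_mul_div, div_lt_div_iff₀ (by positivity) (by norm_num)]
        nlinarith
      linarith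
    obtain ⟨ys, hysmem, hysnear, hsubjet⟩ :=
      exists_subjet_near R (w i) (hw i) xh hxhmem (ρ/3) (by positivity)
    have hdist : dist ys yh < ρ := by
      rw [dist_eq_norm]
      calc ‖ys - yh‖ ≤ ‖ys - xh‖ + ‖xh - yh‖ := by
            simpa using norm_add_le (ys - xh) (xh - yh)
        _ < ρ/3 + ρ/3 := by linarith
        _ < ρ := by linarith
    have h0 := hinterior ys hysmem hsubjet
    have := abs_lt.1 (by simpa [Real.dist_eq] using hball hysmem hdist)
    linarith
  by_contra hneg
  push_neg at hneg
  have := key (-(h yh)/2) (by linarith)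
  linarith

/-- Strict separation of obstacles at the maximum point of the doubled function: for the
maximizers `(x_ε, y_ε, i_ε)` of `Φ^i_ε` and `ε` small enough,
`u_{i_ε}(x_ε) − max_{j≠i_ε}(−g_{i_ε j}(x_ε) + u_j(x_ε)) > 0`. -/
theorem strict_obstacle_separation {m : ℕ} (hm : 1 < m) (R : ℝ) (hR : 0 < R)
    (G : Fin m → EuclideanSpace ℝ (Fin k) → ℝ → EuclideanSpace ℝ (Fin k) →
      Matrix (Fin k) (Fin k) ℝ → ℝ)
    (g : Fin m → Fin m → EuclideanSpace ℝ (Fin k) → ℝ)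
    (hgc : ∀ i j, ContinuousOn (g i j) (Metric.closedBall 0 R))
    (α : ℝ) (hα : 0 < α) (hglb : ∀ i j y, i ≠ j → α ≤ g i j y)
    (u w : Fin m → EuclideanSpace ℝ (Fin k) → ℝ)
    (hu : ∀ i, ContinuousOn (u i) (Metric.closedBall 0 R))
    (hw : ∀ i, ContinuousOn (w i) (Metric.closedBall 0 R))
    (hsub : SystemSubsolution G g u (Metric.closedBall 0 R))
    (hsup : SystemSupersolution G g w (Metric.closedBall 0 R))
    (lam θ γ : ℝ) (hlam : lam ∈ Set.Ioo (0:ℝ) 1) (hθ : θ ∈ Set.Ioo (0:ℝ) 1) (hγ : 1 ≤ γ)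
    (x0 : EuclideanSpace ℝ (Fin k)) (hx0 : x0 ∈ Metric.closedBall 0 R)
    (xe ye : ℝ → EuclideanSpace ℝ (Fin k)) (ie : ℝ → Fin m)
    (hmem : ∀ ε > (0:ℝ), xe ε ∈ Metric.closedBall 0 R ∧ ye ε ∈ Metric.closedBall 0 R)
    (hmax : ∀ ε > (0:ℝ), ∀ i : Fin m,
      ∀ x ∈ Metric.closedBall (0 : EuclideanSpace ℝ (Fin k)) R,
      ∀ y ∈ Metric.closedBall (0 : EuclideanSpace ℝ (Fin k)) R,
        u i x - (1 - lam) * w i y - (1 / (2 * ε)) * ‖x - y‖ ^ (2 * γ)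
            - θ * (‖x - x0‖ ^ (2 * γ + 2) + ‖y - x0‖ ^ (2 * γ + 2))
          ≤ u (ie ε) (xe ε) - (1 - lam) * w (ie ε) (ye ε)
            - (1 / (2 * ε)) * ‖xe ε - ye ε‖ ^ (2 * γ)
            - θ * (‖xe ε - x0‖ ^ (2 * γ + 2) + ‖ye ε - x0‖ ^ (2 * γ + 2))) :
    ∃ ε0 > (0:ℝ), ∀ ε, 0 < ε → ε ≤ ε0 →
      0 < u (ie ε) (xe ε) -
        ⨆ j : {j : Fin m // j ≠ ie ε}, (-(g (ie ε) j (xe ε)) + u j (xe ε)) := by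
  -- bound on all the u i over the closed ball
  have hball0 : (0:EuclideanSpace ℝ (Fin k)) ∈ Metric.closedBall (0:EuclideanSpace ℝ (Fin k)) R :=
    Metric.mem_closedBall_self hR.le
  have hMex : ∃ M : ℝ, 0 ≤ M ∧ ∀ i : Fin m, ∀ y ∈ Metric.closedBall (0:EuclideanSpace ℝ (Fin k)) R,
      |u i y| ≤ M := by
    have h1 : ∀ i : Fin m, ∃ Mi : ℝ, ∀ y ∈ Metric.closedBall (0:EuclideanSpace ℝ (Fin k)) R,
        |u i y| ≤ Mi := by
      intro i
      obtain ⟨Mi, hMi⟩ :=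
        (isCompact_closedBall (0:EuclideanSpace ℝ (Fin k)) R).exists_bound_of_continuousOn (hu i)
      exact ⟨Mi, fun y hy => hMi y hy⟩
    choose Mi hMi using h1
    refine ⟨∑ i, max (Mi i) 0, Finset.sum_nonneg fun i _ => le_max_right _ _, fun i y hy => ?_⟩
    calc |u i y| ≤ max (Mi i) 0 := le_trans (hMi i y hy) (le_max_left _ _)
      _ ≤ ∑ i', max (Mi i') 0 :=
        Finset.single_le_sum (fun i' _ => le_max_right (Mi i') 0) (Finset.mem_univ i)
  obtain ⟨M, hMnn, hM⟩ := hMex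
  -- uniform continuity of the combined cost function
  have hgv : ContinuousOn (fun x => (fun p : Fin m × Fin m => g p.1 p.2 x))
      (Metric.closedBall (0:EuclideanSpace ℝ (Fin k)) R) := by
    apply continuousOn_pi.2
    intro p
    exact hgc p.1 p.2
  have hgu := (isCompact_closedBall (0:EuclideanSpace ℝ (Fin k)) R).uniformContinuousOn_of_continuous hgv
  rw [Metric.uniformContinuousOn_iff] at hgu
  have hlamα : 0 < lam * α := mul_pos hlam.1 hα
  obtain ⟨δ, hδpos, hδ⟩ := hgu (lam * α) hlamα
  -- key exponents
  have hp2 : (0:ℝ) < 2*γ := by linarith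
  have hp2' : (2*γ) ≠ 0 := ne_of_gt hp2
  have hp4 : (0:ℝ) ≤ 2*γ+2 := by linarith
  -- the constant K
  set K : ℝ := 2*M + θ*(2*R)^(2*γ+2) + 1 with hKdef
  have hKpos : 0 < K := by
    have : 0 ≤ θ*(2*R)^(2*γ+2) :=
      mul_nonneg hθ.1.le (Real.rpow_nonneg (by linarith) _)
    linarith
  refine ⟨(δ/2)^(2*γ) / (2*K), by positivity, ?_⟩
  intro ε hε hε0
  set i := ie ε with hidef
  set x := xe ε with hxdef
  set y := ye ε with hydef
  obtain ⟨hx, hy⟩ := hmem ε hε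
  -- distance estimate : ‖x - y‖ < δ
  have hdxy : ‖x - y‖ ≤ δ/2 := by
    have h1 := hmax ε hε i y hy y hy
    rw [← hidef, ← hxdef, ← hydef] at h1
    have h2 : ‖y - y‖ = 0 := by simp
    rw [h2, Real.zero_rpow hp2'] at h1
    have h3 : ‖y - x0‖ ≤ 2*R := by
      calc ‖y - x0‖ ≤ ‖y‖ + ‖x0‖ := norm_sub_le _ _
        _ ≤ R + R := add_le_add (by simpa using hy) (by simpa using hx0)
        _ = 2*R := by ring
    have h4 : ‖y - x0‖^(2*γ+2) ≤ (2*R)^(2*γ+2) :=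
      Real.rpow_le_rpow (norm_nonneg _) h3 hp4
    have h5 : 0 ≤ θ * ‖x - x0‖^(2*γ+2) :=
      mul_nonneg hθ.1.le (Real.rpow_nonneg (norm_nonneg _) _)
    have h6 := abs_le.1 (hM i x hx)
    have h7 := abs_le.1 (hM i y hy)
    have hKb : (1/(2*ε)) * ‖x - y‖^(2*γ) ≤ K := by
      nlinarith [mul_le_mul_of_nonneg_left h4 hθ.1.le]
    have h8 : ‖x - y‖^(2*γ) ≤ 2*ε*K := by
      have := mul_le_mul_of_nonneg_left hKb (by positivity : (0:ℝ) ≤ 2*ε)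
      have he : 2*ε*((1/(2*ε)) * ‖x - y‖^(2*γ)) = ‖x - y‖^(2*γ) := by
        field_simp
      linarith [he ▸ this]
    have h9 : ‖x - y‖^(2*γ) ≤ (δ/2)^(2*γ) := by
      refine le_trans h8 ?_
      have h10 := mul_le_mul_of_nonneg_right hε0 (by linarith : (0:ℝ) ≤ 2*K)
      calc 2*ε*K = ε * (2*K) := by ring
        _ ≤ ((δ/2)^(2*γ) / (2*K)) * (2*K) := h10
        _ = (δ/2)^(2*γ) := by field_simp
    by_contra hcon
    push_neg at hcon
    exact absurd h9 (not_le.2 (Real.rpow_lt_rpow (by positivity) hcon hp2))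
  -- main contradiction argument
  by_contra hcon
  push_neg at hcon
  have hnt : Nontrivial (Fin m) := Fin.nontrivial_iff_two_le.2 hm
  obtain ⟨j0, hj0⟩ := exists_ne i
  have hne : Nonempty {j : Fin m // j ≠ i} := ⟨⟨j0, hj0⟩⟩
  obtain ⟨kk, hkk⟩ := exists_eq_ciSup_of_finite
    (f := fun j : {j : Fin m // j ≠ i} => -(g i j x) + u j x)
  have h1 : u i x ≤ -(g i kk x) + u kk x := by
    rw [hkk]
    linarith [hcon]
  have h2 : w kk y - g i kk y ≤ w i y :=
    supersol_obstacle R hR G g hgc w hw hsup i kk kk.2 y hy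
  have h3 : u kk x - (1-lam) * w kk y ≤ u i x - (1-lam) * w i y := by
    have := hmax ε hε kk x hx y hy
    rw [← hidef, ← hxdef, ← hydef] at this
    linarith
  have h4 : |g i kk x - g i kk y| < lam * α := by
    have hd : dist x y < δ := by
      rw [dist_eq_norm]
      linarith
    have := hδ x hx y hy hd
    calc |g i kk x - g i kk y|
        = dist ((fun p : Fin m × Fin m => g p.1 p.2 x) (i, (kk:Fin m)))
            ((fun p : Fin m × Fin m => g p.1 p.2 y) (i, (kk:Fin m))) := by
          simp [Real.dist_eq]
      _ ≤ dist (fun p : Fin m × Fin m => g p.1 p.2 x) (fun p : Fin m × Fin m => g p.1 p.2 y) := by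
          exact dist_le_pi_dist (fun p : Fin m × Fin m => g p.1 p.2 x)
            (fun p : Fin m × Fin m => g p.1 p.2 y) (i, (kk : Fin m))
      _ < lam * α := this
  have h5 : α ≤ g i kk y := hglb i kk y (Ne.symm kk.2)
  have h6 : (1-lam) * (w kk y - w i y) ≤ (1-lam) * g i kk y :=
    mul_le_mul_of_nonneg_left (by linarith) (by linarith [hlam.2])
  have h7 := abs_lt.1 h4
  nlinarith [hlam.1, hlam.2, mul_le_mul_of_nonneg_left h5 hlam.1.le]
end

section
/- Stability of viscosity subsolutions under monotone uniform limits for the obstacle problem: let u_n be continuous viscosity solutions of A u_n(x) + f(x) + n(u_n(x) − h(x))^- − r u_n(x) = 0 on ℝ^k (with A a linear second-order elliptic operator with continuous coefficients), and suppose u_n ↑ u locally uniformly with u continuous. Then u is a viscosity solution of min{u(x) − h(x), r u(x) − A u(x) − f(x)} = 0. -/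
open Filter Topology Set Matrix

variable {k : ℕ}

/-- Frobenius norm of a real matrix. -/
noncomputable def matNorm {m n : Type*} [Fintype m] [Fintype n] (A : Matrix m n ℝ) : ℝ :=
  Real.sqrt (∑ i, ∑ j, (A i j) ^ 2)

/-- The second-order elliptic operator
`A u = (1/2)Σ(σσᵀ)_{ij}∂²u/∂x_i∂x_j + Σ b_i ∂u/∂x_i` evaluated on jets `(q, H)`. -/
noncomputable def ellipticOp {d : ℕ}
    (b : EuclideanSpace ℝ (Fin k) → EuclideanSpace ℝ (Fin k))
    (σ : EuclideanSpace ℝ (Fin k) → Matrix (Fin k) (Fin d) ℝ)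
    (x q : EuclideanSpace ℝ (Fin k)) (H : Matrix (Fin k) (Fin k) ℝ) : ℝ :=
  (1 / 2) * ((σ x * (σ x)ᵀ) * H).trace + ∑ i, b x i * q i


lemma coord_abs_le (z : EuclideanSpace ℝ (Fin k)) (i : Fin k) : |z i| ≤ ‖z‖ := by
  rw [EuclideanSpace.norm_eq]
  have h1 : |z i| = Real.sqrt (‖z i‖^2) := by rw [Real.sqrt_sq_eq_abs]; simp
  rw [h1]
  apply Real.sqrt_le_sqrt
  exact Finset.single_le_sum (f := fun j => ‖z j‖^2) (fun j _ => by positivity) (Finset.mem_univ i)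

lemma norm_sq_eq' (z : EuclideanSpace ℝ (Fin k)) : ‖z‖^2 = ∑ i, (z i)^2 := by
  rw [EuclideanSpace.norm_eq, Real.sq_sqrt (by positivity)]
  simp [sq_abs]

lemma continuous_coord (i : Fin k) : Continuous (fun z : EuclideanSpace ℝ (Fin k) => z i) :=
  (EuclideanSpace.proj i).continuous

lemma tendsto_coord {xs : ℕ → EuclideanSpace ℝ (Fin k)} {x : EuclideanSpace ℝ (Fin k)}
    (hx : Tendsto xs atTop (𝓝 x)) (i : Fin k) :
    Tendsto (fun n => xs n i) atTop (𝓝 (x i)) :=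
  ((continuous_coord i).continuousAt.tendsto).comp hx

lemma quadForm_add_smul_one (H : Matrix (Fin k) (Fin k) ℝ) (c : ℝ)
    (z : EuclideanSpace ℝ (Fin k)) :
    quadForm (H + c • (1 : Matrix (Fin k) (Fin k) ℝ)) z = quadForm H z + c * ‖z‖^2 := by
  rw [norm_sq_eq']
  simp only [quadForm, Matrix.add_apply, Matrix.smul_apply, Matrix.one_apply, smul_eq_mul,
    mul_ite, mul_one, mul_zero, add_mul, ite_mul, zero_mul]
  rw [Finset.mul_sum, ← Finset.sum_add_distrib]
  refine Finset.sum_congr rfl fun i _ => ?_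
  rw [Finset.sum_add_distrib, Finset.sum_ite_eq Finset.univ i (fun j => c * z i * z j)]
  simp only [Finset.mem_univ, if_true]
  ring

lemma quad_diff (G : Matrix (Fin k) (Fin k) ℝ) (Y P : Fin k → ℝ) :
    (∑ i, ∑ j, G i j * Y i * Y j) - (∑ i, ∑ j, G i j * P i * P j)
    = (∑ i, (∑ j, (G i j + G j i) * P j) * (Y i - P i))
      + ∑ i, ∑ j, G i j * (Y i - P i) * (Y j - P j) := by
  have swap : (∑ i, ∑ j, G j i * P j * (Y i - P i)) = ∑ i, ∑ j, G i j * P i * (Y j - P j) :=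
    Finset.sum_comm
  have expand : (∑ i, (∑ j, (G i j + G j i) * P j) * (Y i - P i))
      = (∑ i, ∑ j, G i j * P j * (Y i - P i)) + ∑ i, ∑ j, G i j * P i * (Y j - P j) := by
    rw [← swap, ← Finset.sum_add_distrib]
    refine Finset.sum_congr rfl fun i _ => ?_
    rw [Finset.sum_mul, ← Finset.sum_add_distrib]
    refine Finset.sum_congr rfl fun j _ => ?_
    ring
  rw [expand]
  rw [← Finset.sum_sub_distrib]
  rw [← Finset.sum_add_distrib, ← Finset.sum_add_distrib]
  refine Finset.sum_congr rfl fun i _ => ?_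
  rw [← Finset.sum_sub_distrib, ← Finset.sum_add_distrib, ← Finset.sum_add_distrib]
  refine Finset.sum_congr rfl fun j _ => ?_
  ring

lemma psi_diff (G : Matrix (Fin k) (Fin k) ℝ) (q : Fin k → ℝ) (x p y : EuclideanSpace ℝ (Fin k)) :
    ((∑ i, q i * (y - x) i) + (1/2) * quadForm G (y - x))
      - ((∑ i, q i * (p - x) i) + (1/2) * quadForm G (p - x))
    = (∑ i, (q i + (1/2) * ∑ j, (G i j + G j i) * (p - x) j) * (y - p) i)
      + (1/2) * quadForm G (y - p) := by
  have hsub : ∀ (a b : EuclideanSpace ℝ (Fin k)) (i : Fin k), (a - b) i = a i - b i :=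
    fun a b i => rfl
  simp only [quadForm, hsub]
  set Y : Fin k → ℝ := fun i => y i - x i with hY
  set P : Fin k → ℝ := fun i => p i - x i with hP
  have hyp : ∀ i, y i - p i = Y i - P i := fun i => by simp [hY, hP]
  simp only [hyp]
  have hq : (∑ i, q i * Y i) - (∑ i, q i * P i) = ∑ i, q i * (Y i - P i) := by
    rw [← Finset.sum_sub_distrib]; exact Finset.sum_congr rfl fun i _ => by ring
  have hd := quad_diff G Y P
  have hrhs : (∑ i, (q i + (1/2) * ∑ j, (G i j + G j i) * P j) * (Y i - P i))
      = (∑ i, q i * (Y i - P i)) + (1/2) * ∑ i, (∑ j, (G i j + G j i) * P j) * (Y i - P i) := by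
    rw [Finset.mul_sum, ← Finset.sum_add_distrib]
    exact Finset.sum_congr rfl fun i _ => by ring
  rw [hrhs]
  linarith [hd, hq]

lemma superjet_of_max (vn : EuclideanSpace ℝ (Fin k) → ℝ) (G : Matrix (Fin k) (Fin k) ℝ)
    (q x p : EuclideanSpace ℝ (Fin k)) (c ρ : ℝ) (hρ : dist p x < ρ)
    (hmax : ∀ y ∈ Metric.closedBall x ρ,
      vn y - (c + (∑ i, q i * (y - x) i) + (1/2) * quadForm G (y - x))
        ≤ vn p - (c + (∑ i, q i * (p - x) i) + (1/2) * quadForm G (p - x))) :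
    InSuperjet vn p (WithLp.toLp 2 fun i => q i + (1/2) * ∑ j, (G i j + G j i) * (p - x) j) G := by
  intro ε hε
  have hball : Metric.ball x ρ ∈ 𝓝 p := Metric.isOpen_ball.mem_nhds (by simpa using hρ)
  filter_upwards [hball] with y hy
  have h1 := hmax y (Metric.ball_subset_closedBall hy)
  have h2 := psi_diff G q x p y
  have h3 : 0 ≤ ε * ‖y - p‖^2 := by positivity
  have h4 : (∑ i, (WithLp.toLp 2 (fun i => q i + (1/2) * ∑ j, (G i j + G j i) * (p - x) j) :
      EuclideanSpace ℝ (Fin k)) i * (y - p) i)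
      = ∑ i, (q i + (1/2) * ∑ j, (G i j + G j i) * (p - x) j) * (y - p) i := rfl
  linarith

lemma subjet_of_min (vn : EuclideanSpace ℝ (Fin k) → ℝ) (G : Matrix (Fin k) (Fin k) ℝ)
    (q x p : EuclideanSpace ℝ (Fin k)) (c ρ : ℝ) (hρ : dist p x < ρ)
    (hmin : ∀ y ∈ Metric.closedBall x ρ,
      vn p - (c + (∑ i, q i * (p - x) i) + (1/2) * quadForm G (p - x))
        ≤ vn y - (c + (∑ i, q i * (y - x) i) + (1/2) * quadForm G (y - x))) :
    InSubjet vn p (WithLp.toLp 2 fun i => q i + (1/2) * ∑ j, (G i j + G j i) * (p - x) j) G := by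
  intro ε hε
  have hball : Metric.ball x ρ ∈ 𝓝 p := Metric.isOpen_ball.mem_nhds (by simpa using hρ)
  filter_upwards [hball] with y hy
  have h1 := hmin y (Metric.ball_subset_closedBall hy)
  have h2 := psi_diff G q x p y
  have h3 : 0 ≤ ε * ‖y - p‖^2 := by positivity
  have h4 : (∑ i, (WithLp.toLp 2 (fun i => q i + (1/2) * ∑ j, (G i j + G j i) * (p - x) j) :
      EuclideanSpace ℝ (Fin k)) i * (y - p) i)
      = ∑ i, (q i + (1/2) * ∑ j, (G i j + G j i) * (p - x) j) * (y - p) i := rfl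
  linarith

lemma exists_max_seq (vn : ℕ → EuclideanSpace ℝ (Fin k) → ℝ)
    (v ψ : EuclideanSpace ℝ (Fin k) → ℝ) (hvn : ∀ n, Continuous (vn n))
    (hv : Continuous v) (hψ : Continuous ψ) (x : EuclideanSpace ℝ (Fin k)) (ρ ε : ℝ)
    (hρ : 0 < ρ) (hε : 0 < ε)
    (hconv : TendstoUniformlyOn (fun n => vn n) v atTop (Metric.closedBall x ρ))
    (hψx : ψ x = v x)
    (hsep : ∀ y ∈ Metric.closedBall x ρ, v y ≤ ψ y - ε * ‖y - x‖^2) :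
    ∃ xs : ℕ → EuclideanSpace ℝ (Fin k),
      (∀ n, ∀ y ∈ Metric.closedBall x ρ, vn n y - ψ y ≤ vn n (xs n) - ψ (xs n)) ∧
      Tendsto xs atTop (𝓝 x) ∧ Tendsto (fun n => vn n (xs n)) atTop (𝓝 (v x)) := by
  have hK : IsCompact (Metric.closedBall x ρ) := isCompact_closedBall x ρ
  have hxK : x ∈ Metric.closedBall x ρ := Metric.mem_closedBall_self hρ.le
  have hex : ∀ n : ℕ, ∃ p ∈ Metric.closedBall x ρ,
      ∀ y ∈ Metric.closedBall x ρ, vn n y - ψ y ≤ vn n p - ψ p := by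
    intro n
    obtain ⟨p, hp, hpm⟩ := hK.exists_isMaxOn ⟨x, hxK⟩ (((hvn n).sub hψ).continuousOn)
    exact ⟨p, hp, fun y hy => hpm hy⟩
  choose xs hmem hmax using hex
  have hx0 : Tendsto (fun n => vn n x) atTop (𝓝 (v x)) := hconv.tendsto_at hxK
  have hlow : ∀ n, vn n x - v x ≤ vn n (xs n) - ψ (xs n) := by
    intro n
    have := hmax n x hxK
    rwa [hψx] at this
  have huni := Metric.tendstoUniformlyOn_iff.mp hconv
  have hsq : Tendsto (fun n => ‖xs n - x‖^2) atTop (𝓝 0) := by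
    rw [Metric.tendsto_nhds]
    intro δ hδ
    have h1 := huni (ε * δ / 4) (by positivity)
    have h2 := (Metric.tendsto_nhds.mp hx0) (ε * δ / 4) (by positivity)
    filter_upwards [h1, h2] with n hn1 hn2
    have ha : dist (v (xs n)) (vn n (xs n)) < ε * δ / 4 := hn1 (xs n) (hmem n)
    rw [Real.dist_eq, abs_lt] at ha hn2
    have hb := hlow n
    have hc := hsep (xs n) (hmem n)
    rw [Real.dist_eq, sub_zero, abs_of_nonneg (by positivity)]
    nlinarith [sq_nonneg (‖xs n - x‖)]
  have hxs : Tendsto xs atTop (𝓝 x) := by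
    rw [tendsto_iff_norm_sub_tendsto_zero]
    have h5 : Tendsto (fun n => Real.sqrt (‖xs n - x‖ ^ 2)) atTop (𝓝 0) := by
      have h6 := (Real.continuous_sqrt.tendsto 0).comp hsq
      simp only [Real.sqrt_zero] at h6
      exact h6
    exact h5.congr (fun n => Real.sqrt_sq (norm_nonneg _))
  refine ⟨xs, hmax, hxs, ?_⟩
  rw [Metric.tendsto_nhds]
  intro δ hδ
  have hψxs : Tendsto (fun n => ψ (xs n)) atTop (𝓝 (v x)) := by
    have := (hψ.continuousAt (x := x)).tendsto.comp hxs
    rwa [hψx] at this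
  have hvxs : Tendsto (fun n => v (xs n)) atTop (𝓝 (v x)) :=
    (hv.continuousAt (x := x)).tendsto.comp hxs
  have h1 := huni (δ / 4) (by positivity)
  have h2 := (Metric.tendsto_nhds.mp hx0) (δ / 4) (by positivity)
  have h3 := (Metric.tendsto_nhds.mp hψxs) (δ / 4) (by positivity)
  have h4 := (Metric.tendsto_nhds.mp hvxs) (δ / 4) (by positivity)
  filter_upwards [h1, h2, h3, h4] with n hn1 hn2 hn3 hn4
  have ha : dist (v (xs n)) (vn n (xs n)) < δ / 4 := hn1 (xs n) (hmem n)
  rw [Real.dist_eq, abs_lt] at ha hn2 hn3 hn4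
  have hb := hlow n
  rw [Real.dist_eq, abs_lt]
  constructor <;> linarith

lemma matNorm_nonneg {m n : Type*} [Fintype m] [Fintype n] (A : Matrix m n ℝ) :
    0 ≤ matNorm A := Real.sqrt_nonneg _

lemma abs_entry_le_matNorm {m n : Type*} [Fintype m] [Fintype n] (A : Matrix m n ℝ)
    (i : m) (j : n) : |A i j| ≤ matNorm A := by
  rw [matNorm]
  have h1 : |A i j| = Real.sqrt ((A i j)^2) := (Real.sqrt_sq_eq_abs _).symm
  rw [h1]
  apply Real.sqrt_le_sqrt
  calc (A i j)^2 ≤ ∑ l, (A i l)^2 :=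
        Finset.single_le_sum (f := fun l => (A i l)^2) (fun l _ => by positivity)
          (Finset.mem_univ j)
    _ ≤ ∑ i', ∑ l, (A i' l)^2 :=
        Finset.single_le_sum (f := fun i' => ∑ l, (A i' l)^2)
          (fun i' _ => Finset.sum_nonneg fun l _ => by positivity) (Finset.mem_univ i)

lemma ellipticOp_eq {d : ℕ} (b : EuclideanSpace ℝ (Fin k) → EuclideanSpace ℝ (Fin k))
    (σ : EuclideanSpace ℝ (Fin k) → Matrix (Fin k) (Fin d) ℝ)
    (x q : EuclideanSpace ℝ (Fin k)) (H : Matrix (Fin k) (Fin k) ℝ) :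
    ellipticOp b σ x q H
      = (1/2) * (∑ i, ∑ j, (∑ l, σ x i l * σ x j l) * H j i) + ∑ i, b x i * q i := by
  simp [ellipticOp, Matrix.trace, Matrix.diag, Matrix.mul_apply, Matrix.transpose_apply,
    Finset.sum_mul]

lemma ellipticOp_add_smul_one {d : ℕ} (b : EuclideanSpace ℝ (Fin k) → EuclideanSpace ℝ (Fin k))
    (σ : EuclideanSpace ℝ (Fin k) → Matrix (Fin k) (Fin d) ℝ)
    (x q : EuclideanSpace ℝ (Fin k)) (H : Matrix (Fin k) (Fin k) ℝ) (c : ℝ) :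
    ellipticOp b σ x q (H + c • (1 : Matrix (Fin k) (Fin k) ℝ))
      = ellipticOp b σ x q H + (c / 2) * (σ x * (σ x)ᵀ).trace := by
  simp only [ellipticOp, Matrix.mul_add, Matrix.mul_smul, Matrix.mul_one, Matrix.trace_add,
    Matrix.trace_smul, smul_eq_mul]
  ring

lemma trace_sigma_nonneg {d : ℕ} (σ : EuclideanSpace ℝ (Fin k) → Matrix (Fin k) (Fin d) ℝ)
    (x : EuclideanSpace ℝ (Fin k)) : 0 ≤ (σ x * (σ x)ᵀ).trace := by
  rw [Matrix.trace]
  apply Finset.sum_nonneg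
  intro i _
  simp only [Matrix.diag, Matrix.mul_apply, Matrix.transpose_apply]
  exact Finset.sum_nonneg fun l _ => mul_self_nonneg _

lemma ellipticOp_tendsto {d : ℕ} (b : EuclideanSpace ℝ (Fin k) → EuclideanSpace ℝ (Fin k))
    (σ : EuclideanSpace ℝ (Fin k) → Matrix (Fin k) (Fin d) ℝ) (C0 : ℝ)
    (hlip : ∀ x x', ‖b x - b x'‖ + matNorm (σ x - σ x') ≤ C0 * ‖x - x'‖)
    (G : Matrix (Fin k) (Fin k) ℝ) (x q : EuclideanSpace ℝ (Fin k))
    (xs qs : ℕ → EuclideanSpace ℝ (Fin k))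
    (hx : Tendsto xs atTop (𝓝 x)) (hq : ∀ i, Tendsto (fun n => qs n i) atTop (𝓝 (q i))) :
    Tendsto (fun n => ellipticOp b σ (xs n) (qs n) G) atTop (𝓝 (ellipticOp b σ x q G)) := by
  have hnorm0 : Tendsto (fun n => ‖xs n - x‖) atTop (𝓝 0) :=
    tendsto_iff_norm_sub_tendsto_zero.mp hx
  have hC : Tendsto (fun n => C0 * ‖xs n - x‖) atTop (𝓝 0) := by
    have := hnorm0.const_mul C0
    simpa using this
  have hσ : ∀ i l, Tendsto (fun n => σ (xs n) i l) atTop (𝓝 (σ x i l)) := by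
    intro i l
    rw [Metric.tendsto_nhds]
    intro δ hδ
    have h1 := (Metric.tendsto_nhds.mp hC) δ hδ
    filter_upwards [h1] with n hn
    rw [Real.dist_eq, sub_zero] at hn
    rw [Real.dist_eq]
    have h2 : |σ (xs n) i l - σ x i l| ≤ matNorm (σ (xs n) - σ x) := by
      have := abs_entry_le_matNorm (σ (xs n) - σ x) i l
      simpa [Matrix.sub_apply] using this
    have h3 := hlip (xs n) x
    have h4 : (0:ℝ) ≤ ‖b (xs n) - b x‖ := norm_nonneg _
    calc |σ (xs n) i l - σ x i l| ≤ matNorm (σ (xs n) - σ x) := h2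
      _ ≤ C0 * ‖xs n - x‖ := by linarith
      _ ≤ |C0 * ‖xs n - x‖| := le_abs_self _
      _ < δ := hn
  have hb : ∀ i, Tendsto (fun n => b (xs n) i) atTop (𝓝 (b x i)) := by
    intro i
    rw [Metric.tendsto_nhds]
    intro δ hδ
    have h1 := (Metric.tendsto_nhds.mp hC) δ hδ
    filter_upwards [h1] with n hn
    rw [Real.dist_eq, sub_zero] at hn
    rw [Real.dist_eq]
    have h2 : |b (xs n) i - b x i| ≤ ‖b (xs n) - b x‖ := by
      have := coord_abs_le (b (xs n) - b x) i
      simpa using this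
    have h3 := hlip (xs n) x
    have h4 : (0:ℝ) ≤ matNorm (σ (xs n) - σ x) := matNorm_nonneg _
    calc |b (xs n) i - b x i| ≤ ‖b (xs n) - b x‖ := h2
      _ ≤ C0 * ‖xs n - x‖ := by linarith
      _ ≤ |C0 * ‖xs n - x‖| := le_abs_self _
      _ < δ := hn
  simp only [ellipticOp_eq]
  apply Tendsto.add
  · apply Tendsto.const_mul
    apply tendsto_finset_sum
    intro i _
    apply tendsto_finset_sum
    intro j _
    exact (tendsto_finset_sum _ (fun l _ => (hσ i l).mul (hσ j l))).mul_const (G j i)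
  · exact tendsto_finset_sum _ (fun i _ => (hb i).mul (hq i))

lemma continuous_psi (G : Matrix (Fin k) (Fin k) ℝ) (q x : EuclideanSpace ℝ (Fin k)) (c : ℝ) :
    Continuous (fun y : EuclideanSpace ℝ (Fin k) =>
      c + (∑ i, q i * (y - x) i) + (1/2) * quadForm G (y - x)) := by
  have hcoord : ∀ i : Fin k, Continuous (fun y : EuclideanSpace ℝ (Fin k) => (y - x) i) := by
    intro i
    exact (continuous_coord i).sub continuous_const
  apply Continuous.add
  · exact continuous_const.add
      (continuous_finset_sum _ fun i _ => continuous_const.mul (hcoord i))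
  · apply continuous_const.mul
    unfold quadForm
    exact continuous_finset_sum _ fun i _ =>
      continuous_finset_sum _ fun j _ => ((continuous_const.mul (hcoord i)).mul (hcoord j))

lemma tendstoUniformlyOn_neg' {un : ℕ → EuclideanSpace ℝ (Fin k) → ℝ}
    {u : EuclideanSpace ℝ (Fin k) → ℝ} {s : Set (EuclideanSpace ℝ (Fin k))}
    (h : TendstoUniformlyOn (fun n => un n) u atTop s) :
    TendstoUniformlyOn (fun n y => -(un n y)) (fun y => -(u y)) atTop s := by
  rw [Metric.tendstoUniformlyOn_iff] at h ⊢
  intro ε hε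
  filter_upwards [h ε hε] with n hn y hy
  simpa [dist_neg_neg] using hn y hy

/-- Stability of viscosity solutions under monotone locally uniform limits for the obstacle
problem: if `uₙ` are continuous viscosity solutions of
`A uₙ + f + n(uₙ − h)⁻ − r uₙ = 0` and `uₙ ↑ u` locally uniformly with `u` continuous, then `u`
is a viscosity solution of `min{u − h, ru − Au − f} = 0`. -/
theorem penalization_stability {d : ℕ}
    (b : EuclideanSpace ℝ (Fin k) → EuclideanSpace ℝ (Fin k))
    (σ : EuclideanSpace ℝ (Fin k) → Matrix (Fin k) (Fin d) ℝ) (C0 : ℝ)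
    (hgrowth : ∀ x, ‖b x‖ + matNorm (σ x) ≤ C0 * (1 + ‖x‖))
    (hlip : ∀ x x', ‖b x - b x'‖ + matNorm (σ x - σ x') ≤ C0 * ‖x - x'‖)
    (f h : EuclideanSpace ℝ (Fin k) → ℝ) (hf : Continuous f) (hh : Continuous h)
    (Cf γ : ℝ) (hfg : ∀ y, |f y| ≤ Cf * (1 + ‖y‖ ^ γ))
    (Ch : ℝ) (hhb : ∀ y, |h y| ≤ Ch)
    (r : ℝ) (hr : 0 < r)
    (un : ℕ → EuclideanSpace ℝ (Fin k) → ℝ) (u : EuclideanSpace ℝ (Fin k) → ℝ)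
    (hunc : ∀ n, Continuous (un n)) (huc : Continuous u)
    (hmono : ∀ x, Monotone fun n => un n x)
    (hconv : TendstoLocallyUniformly (fun n => un n) u atTop)
    -- each `uₙ` is a viscosity solution of the penalized equation:
    (hsubn : ∀ n : ℕ, ∀ x q H, InSuperjet (un n) x q H →
      0 ≤ ellipticOp b σ x q H + f x + (n : ℝ) * max (h x - un n x) 0 - r * un n x)
    (hsupn : ∀ n : ℕ, ∀ x q H, InSubjet (un n) x q H →
      ellipticOp b σ x q H + f x + (n : ℝ) * max (h x - un n x) 0 - r * un n x ≤ 0) :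
    (∀ x q H, InSuperjet u x q H →
      min (u x - h x) (r * u x - ellipticOp b σ x q H - f x) ≤ 0) ∧
    (∀ x q H, InSubjet u x q H →
      0 ≤ min (u x - h x) (r * u x - ellipticOp b σ x q H - f x)) := by
  have hUK : ∀ (x : EuclideanSpace ℝ (Fin k)) (ρ : ℝ),
      TendstoUniformlyOn (fun n => un n) u atTop (Metric.closedBall x ρ) := fun x ρ =>
    (tendstoLocallyUniformlyOn_iff_tendstoUniformlyOn_of_compact
      (isCompact_closedBall x ρ)).mp hconv.tendstoLocallyUniformlyOn
  constructor
  · -- subsolution property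
    intro x q H hsup
    rcases le_or_gt (u x - h x) 0 with hc | hc
    · exact min_le_of_left_le hc
    · apply min_le_of_right_le
      set T := (σ x * (σ x)ᵀ).trace with hT
      have hTn : 0 ≤ T := trace_sigma_nonneg σ x
      have key : ∀ ε : ℝ, 0 < ε → r * u x - ellipticOp b σ x q H - f x ≤ 2 * ε * T := by
        intro ε hε
        set G := H + (4*ε) • (1 : Matrix (Fin k) (Fin k) ℝ) with hG
        obtain ⟨ρ₀, hρ₀, hball⟩ := Metric.eventually_nhds_iff.mp (hsup ε hε)
        set ρ := ρ₀ / 2 with hρdef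
        have hρ : 0 < ρ := by positivity
        set ψ : EuclideanSpace ℝ (Fin k) → ℝ := fun y =>
          u x + (∑ i, q i * (y - x) i) + (1/2) * quadForm G (y - x) with hψdef
        have hψc : Continuous ψ := continuous_psi G q x (u x)
        have hψx : ψ x = u x := by
          simp [hψdef, quadForm, sub_self]
        have hsep : ∀ y ∈ Metric.closedBall x ρ, u y ≤ ψ y - ε * ‖y - x‖^2 := by
          intro y hy
          have h1 := hball (y := y)
            (lt_of_le_of_lt (Metric.mem_closedBall.mp hy) (by rw [hρdef]; linarith))
          have h2 : quadForm G (y - x) = quadForm H (y - x) + 4 * ε * ‖y - x‖^2 := by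
            rw [hG, quadForm_add_smul_one]
          have h3 : ψ y = u x + (∑ i, q i * (y - x) i) + (1/2) * quadForm G (y - x) := rfl
          rw [h3, h2]
          linarith
        obtain ⟨xs, hmax, hxs, hval⟩ := exists_max_seq un u ψ hunc huc hψc x ρ ε hρ hε
          (hUK x ρ) hψx hsep
        have hev1 : ∀ᶠ n in atTop, dist (xs n) x < ρ := (Metric.tendsto_nhds.mp hxs) ρ hρ
        set qs : ℕ → EuclideanSpace ℝ (Fin k) := fun n =>
          (WithLp.toLp 2 fun i => q i + (1/2) * ∑ j, (G i j + G j i) * (xs n - x) j) with hqs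
        have hjet : ∀ᶠ n in atTop, InSuperjet (un n) (xs n) (qs n) G := by
          filter_upwards [hev1] with n hn
          exact superjet_of_max (un n) G q x (xs n) (u x) ρ hn (fun y hy => hmax n y hy)
        have hq : ∀ i, Tendsto (fun n => qs n i) atTop (𝓝 (q i)) := by
          intro i
          have hz : ∀ j : Fin k, Tendsto (fun n => (xs n - x) j) atTop (𝓝 0) := by
            intro j
            have := (tendsto_coord hxs j).sub_const (x j)
            simpa using this
          have hsum : Tendsto (fun n => (1/2) * ∑ j, (G i j + G j i) * (xs n - x) j)
              atTop (𝓝 0) := by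
            have h5 := tendsto_finset_sum Finset.univ
              (fun j (_ : j ∈ Finset.univ) => ((hz j).const_mul (G i j + G j i)))
            simp only [mul_zero, Finset.sum_const_zero] at h5
            have := h5.const_mul ((1:ℝ)/2)
            simpa using this
          have := hsum.const_add (q i)
          simpa [hqs] using this
        have hL := ellipticOp_tendsto b σ C0 hlip G x q xs qs hxs hq
        have hpen : ∀ᶠ n in atTop, max (h (xs n) - un n (xs n)) 0 = 0 := by
          have hh1 : Tendsto (fun n => h (xs n) - un n (xs n)) atTop (𝓝 (h x - u x)) :=
            ((hh.continuousAt (x := x)).tendsto.comp hxs).sub hval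
          have hlt : ∀ᶠ n in atTop, h (xs n) - un n (xs n) < 0 :=
            hh1.eventually_lt_const (by linarith)
          filter_upwards [hlt] with n hn
          exact max_eq_right hn.le
        have hfin : ∀ᶠ n in atTop,
            0 ≤ ellipticOp b σ (xs n) (qs n) G + f (xs n) - r * un n (xs n) := by
          filter_upwards [hjet, hpen] with n h1 h2
          have h3 := hsubn n (xs n) (qs n) G h1
          rw [h2] at h3
          simpa using h3
        have hlim : Tendsto
            (fun n => ellipticOp b σ (xs n) (qs n) G + f (xs n) - r * un n (xs n))
            atTop (𝓝 (ellipticOp b σ x q G + f x - r * u x)) :=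
          (hL.add ((hf.continuousAt (x := x)).tendsto.comp hxs)).sub (hval.const_mul r)
        have h0 : 0 ≤ ellipticOp b σ x q G + f x - r * u x := ge_of_tendsto hlim hfin
        rw [hG, ellipticOp_add_smul_one] at h0
        rw [← hT] at h0
        linarith
      have hfinal : ∀ δ : ℝ, 0 < δ → r * u x - ellipticOp b σ x q H - f x ≤ 0 + δ := by
        intro δ hδ
        have hε : 0 < δ / (2 * (T + 1)) := by positivity
        have := key _ hε
        have h6 : 2 * (δ / (2 * (T + 1))) * T ≤ δ := by
          have hcancel : δ / (2 * (T + 1)) * (2 * (T + 1)) = δ :=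
            div_mul_cancel₀ _ (by linarith)
          nlinarith [hε.le]
        linarith
      linarith [le_of_forall_pos_le_add hfinal]
  · -- supersolution property
    intro x q H hsub
    set T := (σ x * (σ x)ᵀ).trace with hT
    have hTn : 0 ≤ T := trace_sigma_nonneg σ x
    have main : ∀ ε : ℝ, 0 < ε →
        (ellipticOp b σ x q H - 2 * ε * T + f x - r * u x ≤ 0) ∧ (h x - u x ≤ 0) := by
      intro ε hε
      set G := H + (-(4*ε)) • (1 : Matrix (Fin k) (Fin k) ℝ) with hG
      obtain ⟨ρ₀, hρ₀, hball⟩ := Metric.eventually_nhds_iff.mp (hsub ε hε)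
      set ρ := ρ₀ / 2 with hρdef
      have hρ : 0 < ρ := by positivity
      set ψ : EuclideanSpace ℝ (Fin k) → ℝ := fun y =>
        u x + (∑ i, q i * (y - x) i) + (1/2) * quadForm G (y - x) with hψdef
      have hψc : Continuous ψ := continuous_psi G q x (u x)
      have hψx : ψ x = u x := by
        simp [hψdef, quadForm, sub_self]
      have hψxneg : (fun y => -(ψ y)) x = (fun y => -(u y)) x := by simp [hψx]
      have hsep : ∀ y ∈ Metric.closedBall x ρ, -(u y) ≤ -(ψ y) - ε * ‖y - x‖^2 := by
        intro y hy
        have h1 := hball (y := y)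
          (lt_of_le_of_lt (Metric.mem_closedBall.mp hy) (by rw [hρdef]; linarith))
        have h2 : quadForm G (y - x) = quadForm H (y - x) + (-(4 * ε)) * ‖y - x‖^2 := by
          rw [hG, quadForm_add_smul_one]
        have h3 : ψ y = u x + (∑ i, q i * (y - x) i) + (1/2) * quadForm G (y - x) := rfl
        rw [h3, h2]
        linarith
      obtain ⟨xs, hmax, hxs, hvalneg⟩ := exists_max_seq (fun n y => -(un n y))
        (fun y => -(u y)) (fun y => -(ψ y)) (fun n => (hunc n).neg) huc.neg hψc.neg
        x ρ ε hρ hε (tendstoUniformlyOn_neg' (hUK x ρ)) hψxneg hsep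
      have hval : Tendsto (fun n => un n (xs n)) atTop (𝓝 (u x)) := by
        have := hvalneg.neg
        simpa using this
      have hmin : ∀ n, ∀ y ∈ Metric.closedBall x ρ,
          un n (xs n) - ψ (xs n) ≤ un n y - ψ y := by
        intro n y hy
        have h4 := hmax n y hy
        linarith
      have hev1 : ∀ᶠ n in atTop, dist (xs n) x < ρ := (Metric.tendsto_nhds.mp hxs) ρ hρ
      set qs : ℕ → EuclideanSpace ℝ (Fin k) := fun n =>
        (WithLp.toLp 2 fun i => q i + (1/2) * ∑ j, (G i j + G j i) * (xs n - x) j) with hqs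
      have hjet : ∀ᶠ n in atTop, InSubjet (un n) (xs n) (qs n) G := by
        filter_upwards [hev1] with n hn
        exact subjet_of_min (un n) G q x (xs n) (u x) ρ hn (fun y hy => hmin n y hy)
      have hq : ∀ i, Tendsto (fun n => qs n i) atTop (𝓝 (q i)) := by
        intro i
        have hz : ∀ j : Fin k, Tendsto (fun n => (xs n - x) j) atTop (𝓝 0) := by
          intro j
          have := (tendsto_coord hxs j).sub_const (x j)
          simpa using this
        have hsum : Tendsto (fun n => (1/2) * ∑ j, (G i j + G j i) * (xs n - x) j)
            atTop (𝓝 0) := by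
          have h5 := tendsto_finset_sum Finset.univ
            (fun j (_ : j ∈ Finset.univ) => ((hz j).const_mul (G i j + G j i)))
          simp only [mul_zero, Finset.sum_const_zero] at h5
          have := h5.const_mul ((1:ℝ)/2)
          simpa using this
        have := hsum.const_add (q i)
        simpa [hqs] using this
      have hL := ellipticOp_tendsto b σ C0 hlip G x q xs qs hxs hq
      have hfin : ∀ᶠ n in atTop,
          ellipticOp b σ (xs n) (qs n) G + f (xs n) - r * un n (xs n) ≤ 0 := by
        filter_upwards [hjet] with n h1
        have h3 := hsupn n (xs n) (qs n) G h1
        have hpen : 0 ≤ (n : ℝ) * max (h (xs n) - un n (xs n)) 0 :=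
          mul_nonneg (Nat.cast_nonneg n) (le_max_right _ _)
        linarith
      have hlim : Tendsto
          (fun n => ellipticOp b σ (xs n) (qs n) G + f (xs n) - r * un n (xs n))
          atTop (𝓝 (ellipticOp b σ x q G + f x - r * u x)) :=
        (hL.add ((hf.continuousAt (x := x)).tendsto.comp hxs)).sub (hval.const_mul r)
      have h0 : ellipticOp b σ x q G + f x - r * u x ≤ 0 := le_of_tendsto hlim hfin
      constructor
      · rw [hG, ellipticOp_add_smul_one] at h0
        rw [← hT] at h0
        linarith
      · -- penalty argument : u x ≥ h x
        have hg : Tendsto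
            (fun n => r * un n (xs n) - f (xs n) - ellipticOp b σ (xs n) (qs n) G)
            atTop (𝓝 (r * u x - f x - ellipticOp b σ x q G)) :=
          ((hval.const_mul r).sub ((hf.continuousAt (x := x)).tendsto.comp hxs)).sub hL
        have hgdiv : Tendsto
            (fun n => (r * un n (xs n) - f (xs n) - ellipticOp b σ (xs n) (qs n) G)
              * (1 / (n : ℝ))) atTop (𝓝 0) := by
          have := hg.mul tendsto_one_div_atTop_nhds_zero_nat
          simpa using this
        have hPl : Tendsto (fun n => max (h (xs n) - un n (xs n)) 0)
            atTop (𝓝 (max (h x - u x) 0)) :=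
          ((((hh.continuousAt (x := x)).tendsto.comp hxs)).sub hval).max tendsto_const_nhds
        have hPle : ∀ᶠ n in atTop, max (h (xs n) - un n (xs n)) 0 ≤
            (r * un n (xs n) - f (xs n) - ellipticOp b σ (xs n) (qs n) G) * (1 / (n : ℝ)) := by
          filter_upwards [hjet, eventually_ge_atTop 1] with n h1 hn1
          have h3 := hsupn n (xs n) (qs n) G h1
          have hnpos : (0:ℝ) < (n : ℝ) := by
            have : 0 < n := Nat.lt_of_lt_of_le Nat.zero_lt_one hn1
            exact_mod_cast this
          rw [mul_one_div, le_div_iff₀ hnpos]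
          calc max (h (xs n) - un n (xs n)) 0 * (n:ℝ)
              = (n:ℝ) * max (h (xs n) - un n (xs n)) 0 := by ring
            _ ≤ r * un n (xs n) - f (xs n) - ellipticOp b σ (xs n) (qs n) G := by linarith
        have hmaxle : max (h x - u x) 0 ≤ 0 := le_of_tendsto_of_tendsto hPl hgdiv hPle
        have := le_max_left (h x - u x) (0:ℝ)
        linarith
    have h1 := (main 1 one_pos).2
    have h2 : 0 ≤ r * u x - ellipticOp b σ x q H - f x := by
      have hfinal : ∀ δ : ℝ, 0 < δ →
          -(r * u x - ellipticOp b σ x q H - f x) ≤ 0 + δ := by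
        intro δ hδ
        have hε : 0 < δ / (2 * (T + 1)) := by positivity
        have h5 := (main _ hε).1
        have h6 : 2 * (δ / (2 * (T + 1))) * T ≤ δ := by
          have hcancel : δ / (2 * (T + 1)) * (2 * (T + 1)) = δ :=
            div_mul_cancel₀ _ (by linarith)
          nlinarith [hε.le]
        linarith
      linarith [le_of_forall_pos_le_add hfinal]
    exact le_min (by linarith) h2
end
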